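/- Let A, B be subspaces of E, let o, o' be E-orbits contained in X_A, and let γ : o → o' be an E-equivariant bijection; set 𝒪_γ := {(γ(x), x) : x ∈ o}, an E-orbit in X²_{AA}. Then for any subspace C, any E × B-orbit 𝓜 on X²_{AC} with p₁𝓜 = o and any ε ∈ (A∩C)*, one has [𝒪_γ]^0 ⋆ [𝓜]^ε = [𝓜']^ε where 𝓜' := {(γ(x), z) : (x,z) ∈ 𝓜}; consequently left multiplication by [𝒪_γ]^0 defines a ℂ-linear isomorphism [[oB]] → [[o'B]] carrying 𝓑_{oB} onto 𝓑_{o'B}. -/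

import Mathlib

open scoped Classical

set_option linter.unusedSectionVars false

noncomputable section

namespace Lusztig

variable (E X : Type) [AddCommGroup E] [Module (ZMod 2) E] [Fintype E]
  [Fintype X] [AddAction E X]

/-- The stabilizer of `x` in `E`, as a subset of `E`. -/
def stabSet (x : X) : Set E := {e : E | e +ᵥ x = x}

/-- `X_A`: the set of points of `X` whose stabilizer in `E` equals `A`. -/
def XA (A : Submodule (ZMod 2) E) : Set X := {x : X | stabSet E X x = (A : Set E)}

/-- `X²_{AB} = X_A × X_B`. -/
def X2 (A B : Submodule (ZMod 2) E) : Set (X × X) := (XA E X A) ×ˢ (XA E X B)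

/-- The `E`-orbit of `x` in `X`. -/
def orb (x : X) : Set X := {y : X | ∃ e : E, y = e +ᵥ x}

/-- The `E`-orbit of `(x,y)` for the diagonal action of `E` on `X × X`. -/
def orb2 (x y : X) : Set (X × X) := {q : X × X | ∃ e : E, q = (e +ᵥ x, e +ᵥ y)}

/-- `O` is an `E`-orbit (for the diagonal action) contained in `X²_{AB}`. -/
def IsOrb2 (A B : Submodule (ZMod 2) E) (O : Set (X × X)) : Prop :=
  ∃ x y : X, x ∈ XA E X A ∧ y ∈ XA E X B ∧ O = orb2 E X x y

/-- The `E × B`-orbit of `(x,y)` for the action `(e,b)·(x,y) = (e+b+x, e+y)`. -/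
def orbEB (B : Submodule (ZMod 2) E) (x y : X) : Set (X × X) :=
  {q : X × X | ∃ e b : E, b ∈ B ∧ q = ((e + b) +ᵥ x, e +ᵥ y)}

/-- `M` is an `E × B`-orbit contained in `X²_{AC}` for the action
`(e,b)·(x,y) = (e+b+x, e+y)`. -/
def IsOrbEB (A B C : Submodule (ZMod 2) E) (M : Set (X × X)) : Prop :=
  ∃ x y : X, x ∈ XA E X A ∧ y ∈ XA E X C ∧ M = orbEB E X B x y

/-- Image under the first projection. -/
def p1 (S : Set (X × X)) : Set X := Prod.fst '' S

/-- Image under the second projection. -/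
def p2 (S : Set (X × X)) : Set X := Prod.snd '' S

/-- `U_{ABC} = {(a,b,c) ∈ A × B × C : a + b + c = 0}`. -/
def UABC (A B C : Submodule (ZMod 2) E) : Set (E × E × E) :=
  {t : E × E × E | t.1 ∈ A ∧ t.2.1 ∈ B ∧ t.2.2 ∈ C ∧ t.1 + t.2.1 + t.2.2 = 0}

/-- `X̄_C`: the set of `E`-orbits contained in `X_C`. -/
def barX (C : Submodule (ZMod 2) E) : Set (Set X) :=
  {s : Set X | ∃ x ∈ XA E X C, s = orb E X x}

/-- The dual (space of linear forms `P → ℤ/2`) of a subspace `P` of `E`. -/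
abbrev Dl (P : Submodule (ZMod 2) E) : Type := ↥P →ₗ[ZMod 2] ZMod 2

/-- Restriction of a linear form along an inclusion of subspaces. -/
def res {P Q : Submodule (ZMod 2) E} (h : P ≤ Q) (φ : Dl E Q) : Dl E P :=
  φ.comp (Submodule.inclusion h)

theorem leAB (A B C : Submodule (ZMod 2) E) : A ⊓ B ⊓ C ≤ A ⊓ B := inf_le_left
theorem leBC (A B C : Submodule (ZMod 2) E) : A ⊓ B ⊓ C ≤ B ⊓ C :=
  le_inf (inf_le_left.trans inf_le_right) inf_le_right
theorem leAC (A B C : Submodule (ZMod 2) E) : A ⊓ B ⊓ C ≤ A ⊓ C :=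
  le_inf (inf_le_left.trans inf_le_left) inf_le_right
theorem leBA (A B : Submodule (ZMod 2) E) : A ⊓ B ≤ B ⊓ A := le_inf inf_le_right inf_le_left

/-- The convolution product `𝓕_{AB} × 𝓕_{BC} → 𝓕_{AC}`. -/
def conv (A B C : Submodule (ZMod 2) E)
    (f₁ : (X × X) × Dl E (A ⊓ B) → ℂ) (f₂ : (X × X) × Dl E (B ⊓ C) → ℂ) :
    (X × X) × Dl E (A ⊓ C) → ℂ :=
  fun p =>
    (∑ᶠ (y : X) (_ : y ∈ XA E X B) (ε₁ : Dl E (A ⊓ B)) (ε₂ : Dl E (B ⊓ C))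
        (_ : res E (leAB E A B C) ε₁ + res E (leBC E A B C) ε₂
              + res E (leAC E A B C) p.2 = 0),
        f₁ ((p.1.1, y), ε₁) * f₂ ((y, p.1.2), ε₂)) *
      (Nat.card ↥(A ⊓ B ⊓ C) : ℂ) / (Nat.card ↥(A ⊓ C) : ℂ)

/-- The defining conditions for membership in `𝓕_{AB}`: supported on `X²_{AB}` and
invariant under the diagonal `E`-action. -/
def MemF (A B : Submodule (ZMod 2) E) (f : (X × X) × Dl E (A ⊓ B) → ℂ) : Prop :=
  (∀ p : (X × X) × Dl E (A ⊓ B), p.1 ∉ X2 E X A B → f p = 0) ∧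
  (∀ (e : E) (x y : X) (ε : Dl E (A ⊓ B)), f ((e +ᵥ x, e +ᵥ y), ε) = f ((x, y), ε))

/-- `𝓕_{AB}` as a subspace of the space of all functions. -/
def FAB (A B : Submodule (ZMod 2) E) : Submodule ℂ ((X × X) × Dl E (A ⊓ B) → ℂ) where
  carrier := {f | MemF E X A B f}
  add_mem' := by
    intro a b ha hb
    exact ⟨fun p hp => by simp [ha.1 p hp, hb.1 p hp],
      fun e x y ε => by simp [Pi.add_apply, ha.2 e x y ε, hb.2 e x y ε]⟩
  zero_mem' := ⟨fun p hp => rfl, fun e x y ε => rfl⟩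
  smul_mem' := by
    intro c a ha
    exact ⟨fun p hp => by simp [Pi.smul_apply, ha.1 p hp],
      fun e x y ε => by simp [Pi.smul_apply, ha.2 e x y ε]⟩

/-- `[Ξ]^ε`. -/
def br (A B : Submodule (ZMod 2) E) (Ξ : Set (X × X)) (ε : Dl E (A ⊓ B)) :
    (X × X) × Dl E (A ⊓ B) → ℂ :=
  fun p => if p.1 ∈ Ξ ∧ p.2 = ε then 1 else 0

/-- The ambient space of `𝓕 = ⊕_{A,B} 𝓕_{AB}` (all summands at once). -/
abbrev FF : Type := ∀ A B : Submodule (ZMod 2) E, (X × X) × Dl E (A ⊓ B) → ℂ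

/-- The embedding of the `(A,B)` summand into `𝓕`. -/
def emb (A B : Submodule (ZMod 2) E) (f : (X × X) × Dl E (A ⊓ B) → ℂ) : FF E X :=
  fun A' B' p =>
    if h : A = A' ∧ B = B' then f (p.1, cast (by rw [h.1, h.2]) p.2) else 0

/-- `𝓕` as a subspace of `FF`: componentwise supported on `X²_{AB}` and `E`-invariant. -/
def FFsub : Submodule ℂ (FF E X) where
  carrier := {g | ∀ A B, MemF E X A B (g A B)}
  add_mem' := by
    intro a b ha hb A B
    exact ⟨fun p hp => by simp [(ha A B).1 p hp, (hb A B).1 p hp],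
      fun e x y ε => by simp [(ha A B).2 e x y ε, (hb A B).2 e x y ε]⟩
  zero_mem' := fun A B => ⟨fun p hp => rfl, fun e x y ε => rfl⟩
  smul_mem' := by
    intro c a ha A B
    exact ⟨fun p hp => by simp [(ha A B).1 p hp],
      fun e x y ε => by simp [(ha A B).2 e x y ε]⟩

/-- The product on `𝓕` (zero between summands `𝓕_{AB}`, `𝓕_{B'C}` with `B ≠ B'`). -/
def mulFF (g h : FF E X) : FF E X :=
  fun A C => ∑ᶠ B : Submodule (ZMod 2) E, conv E X A B C (g A B) (h B C)

/-- The diagonal `Δ_A ⊆ X²_{AA}`. -/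
def diagSet (A : Submodule (ZMod 2) E) : Set (X × X) :=
  {q : X × X | q.1 ∈ XA E X A ∧ q.2 = q.1}

/-- The element `∑_A [Δ_A]^0` of `𝓕`. -/
def unitFF : FF E X :=
  ∑ᶠ A : Submodule (ZMod 2) E, emb E X A A (br E X A A (diagSet E X A) 0)

/-- The map `f ↦ f^#` on `𝓕`. -/
def shFF (g : FF E X) : FF E X :=
  fun A B p => g B A ((p.1.2, p.1.1), res E (leBA E B A) p.2)

/-- `𝒪 • 𝒪'`. -/
def bullet (O O' : Set (X × X)) : Set (X × X) :=
  {q : X × X | ∃ y : X, (q.1, y) ∈ O ∧ (y, q.2) ∈ O'}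

/-- `∑_{ε ∈ α̃} [𝓜]^ε ∈ 𝓕_{AC}`, where `α̃` is the fibre of
`(A∩C)* → (A∩B∩C)*` over `α`. -/
def bSum (A B C : Submodule (ZMod 2) E) (M : Set (X × X)) (α : Dl E (A ⊓ B ⊓ C)) :
    (X × X) × Dl E (A ⊓ C) → ℂ :=
  ∑ᶠ (ε : Dl E (A ⊓ C)) (_ : res E (leAC E A B C) ε = α), br E X A C M ε

/-- The set `𝓑_{oBC} ⊆ 𝓕` (embedded in `FF`). -/
def BoBC (A B C : Submodule (ZMod 2) E) (o : Set X) : Set (FF E X) :=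
  {g | ∃ (M : Set (X × X)) (α : Dl E (A ⊓ B ⊓ C)),
      IsOrbEB E X A B C M ∧ p1 X M = o ∧ g = emb E X A C (bSum E X A B C M α)}

/-- The set `𝓑_{oB} = ⊔_C 𝓑_{oBC}`. -/
def BoB (A B : Submodule (ZMod 2) E) (o : Set X) : Set (FF E X) :=
  ⋃ C : Submodule (ZMod 2) E, BoBC E X A B C o

/-- `[[oB]]`, the `ℂ`-span of `𝓑_{oB}`. -/
def ooB (A B : Submodule (ZMod 2) E) (o : Set X) : Submodule ℂ (FF E X) :=
  Submodule.span ℂ (BoB E X A B o)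


/-! ### Auxiliary lemmas -/

instance finiteDl (P : Submodule (ZMod 2) E) : Finite (Dl E P) :=
  Finite.of_injective (fun f => (f : P → ZMod 2)) DFunLike.coe_injective

noncomputable instance fintypeDl (P : Submodule (ZMod 2) E) : Fintype (Dl E P) :=
  Fintype.ofFinite _

noncomputable instance fintypeSubmodule : Fintype (Submodule (ZMod 2) E) :=
  Fintype.ofFinite _

lemma dl_add_self {P : Submodule (ZMod 2) E} (f : Dl E P) : f + f = 0 := by
  ext x
  have h2 : ∀ a : ZMod 2, a + a = 0 := by decide
  simpa using h2 (f x)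

lemma dl_add_eq_zero_iff {P : Submodule (ZMod 2) E} {f g : Dl E P} : f + g = 0 ↔ f = g :=
  ⟨fun h => add_right_cancel (h.trans (dl_add_self E g).symm), fun h => h ▸ dl_add_self E g⟩

lemma res_zero {P Q : Submodule (ZMod 2) E} (h : P ≤ Q) : res E h 0 = 0 :=
  LinearMap.zero_comp _

lemma res_AAC_inj (A C : Submodule (ZMod 2) E) {ε η : Dl E (A ⊓ C)}
    (h : res E (leBC E A A C) ε = res E (leAC E A A C) η) : ε = η := by
  ext x
  obtain ⟨x, hx⟩ := x
  have hx' : x ∈ A ⊓ A ⊓ C := by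
    simp only [Submodule.mem_inf] at hx ⊢
    exact ⟨⟨hx.1, hx.1⟩, hx.2⟩
  exact DFunLike.congr_fun h ⟨x, hx'⟩

lemma vadd_cancelE {e : E} {x y : X} (h : e +ᵥ x = e +ᵥ y) : x = y := by
  have := congrArg (fun z => (-e) +ᵥ z) h
  simpa [vadd_vadd] using this

lemma XA_vadd {A : Submodule (ZMod 2) E} {x : X} (hx : x ∈ XA E X A) (e : E) :
    e +ᵥ x ∈ XA E X A := by
  have hst : stabSet E X (e +ᵥ x) = stabSet E X x := by
    ext e'
    simp only [stabSet, Set.mem_setOf_eq]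
    have comm : e' +ᵥ (e +ᵥ x) = e +ᵥ (e' +ᵥ x) := by
      rw [vadd_vadd, vadd_vadd, add_comm]
    constructor
    · intro h
      rw [comm] at h
      exact vadd_cancelE E X h
    · intro h
      rw [comm, h]
  simp only [XA, Set.mem_setOf_eq] at hx ⊢
  rw [hst, hx]

lemma orb_vadd {x y : X} (hy : y ∈ orb E X x) (e : E) : e +ᵥ y ∈ orb E X x := by
  obtain ⟨e', he⟩ := hy
  exact ⟨e + e', by rw [he, vadd_vadd]⟩

lemma orb_subset_XA {A : Submodule (ZMod 2) E} {x : X} (hx : x ∈ XA E X A) :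
    orb E X x ⊆ XA E X A := by
  rintro y ⟨e, rfl⟩
  exact XA_vadd E X hx e

lemma mem_orb_self (x : X) : x ∈ orb E X x := ⟨0, (zero_vadd E x).symm⟩

lemma card_ne_zero (P : Submodule (ZMod 2) E) : (Nat.card ↥P : ℂ) ≠ 0 := by
  have : 0 < Nat.card ↥P := @Nat.card_pos _ ⟨(0 : P)⟩ _
  exact_mod_cast this.ne'

lemma conv_apply (A B C : Submodule (ZMod 2) E)
    (f₁ : (X × X) × Dl E (A ⊓ B) → ℂ) (f₂ : (X × X) × Dl E (B ⊓ C) → ℂ)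
    (p : (X × X) × Dl E (A ⊓ C)) :
    conv E X A B C f₁ f₂ p =
      (∑ y : X, if y ∈ XA E X B then
          (∑ ε₁ : Dl E (A ⊓ B), ∑ ε₂ : Dl E (B ⊓ C),
            if res E (leAB E A B C) ε₁ + res E (leBC E A B C) ε₂
                + res E (leAC E A B C) p.2 = 0
            then f₁ ((p.1.1, y), ε₁) * f₂ ((y, p.1.2), ε₂) else 0)
        else 0) *
      (Nat.card ↥(A ⊓ B ⊓ C) : ℂ) / (Nat.card ↥(A ⊓ C) : ℂ) := by
  unfold conv
  simp only [finsum_eq_sum_of_fintype, finsum_eq_if]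

lemma conv_zero_left (A B C : Submodule (ZMod 2) E) (f₂ : (X × X) × Dl E (B ⊓ C) → ℂ) :
    conv E X A B C 0 f₂ = 0 := by
  funext p
  simp [conv_apply, Finset.sum_const_zero]

lemma conv_zero_right (A B C : Submodule (ZMod 2) E) (f₁ : (X × X) × Dl E (A ⊓ B) → ℂ) :
    conv E X A B C f₁ 0 = 0 := by
  funext p
  simp [conv_apply, Finset.sum_const_zero]

lemma conv_add_right (A B C : Submodule (ZMod 2) E)
    (f : (X × X) × Dl E (A ⊓ B) → ℂ) (g h : (X × X) × Dl E (B ⊓ C) → ℂ) :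
    conv E X A B C f (g + h) = conv E X A B C f g + conv E X A B C f h := by
  funext p
  simp only [conv_apply, Pi.add_apply]
  rw [← add_div, ← add_mul, ← Finset.sum_add_distrib]
  congr 2
  refine Finset.sum_congr rfl fun y _ => ?_
  split_ifs with hy
  · rw [← Finset.sum_add_distrib]
    refine Finset.sum_congr rfl fun ε₁ _ => ?_
    rw [← Finset.sum_add_distrib]
    refine Finset.sum_congr rfl fun ε₂ _ => ?_
    split_ifs with hc
    · ring
    · ring
  · ring

lemma mul_div_helper (S S' n d c : ℂ) (h : S' = c * S) : S' * n / d = c * (S * n / d) := by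
  rw [h]; ring

lemma conv_smul_right (A B C : Submodule (ZMod 2) E)
    (f : (X × X) × Dl E (A ⊓ B) → ℂ) (c : ℂ) (g : (X × X) × Dl E (B ⊓ C) → ℂ) :
    conv E X A B C f (c • g) = c • conv E X A B C f g := by
  funext p
  simp only [conv_apply, Pi.smul_apply, smul_eq_mul]
  refine mul_div_helper _ _ _ _ _ ?_
  rw [Finset.mul_sum]
  refine Finset.sum_congr rfl fun y _ => ?_
  split_ifs with hy
  · rw [Finset.mul_sum]
    refine Finset.sum_congr rfl fun ε₁ _ => ?_
    rw [Finset.mul_sum]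
    refine Finset.sum_congr rfl fun ε₂ _ => ?_
    split_ifs with hc
    · ring
    · ring
  · ring

lemma conv_finsetsum_right {ι : Type} (A B C : Submodule (ZMod 2) E)
    (f : (X × X) × Dl E (A ⊓ B) → ℂ) (s : Finset ι)
    (g : ι → ((X × X) × Dl E (B ⊓ C) → ℂ)) :
    conv E X A B C f (∑ i ∈ s, g i) = ∑ i ∈ s, conv E X A B C f (g i) :=
  map_sum (AddMonoidHom.mk' (conv E X A B C f) (conv_add_right E X A B C f)) g s

lemma br_apply (A B : Submodule (ZMod 2) E) (Ξ : Set (X × X)) (ε ζ : Dl E (A ⊓ B)) (q : X × X) :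
    br E X A B Ξ ε (q, ζ) = if q ∈ Ξ ∧ ζ = ε then 1 else 0 := rfl

lemma card_AAC (A C : Submodule (ZMod 2) E) :
    (Nat.card ↥(A ⊓ A ⊓ C) : ℂ) = (Nat.card ↥(A ⊓ C) : ℂ) := by
  rw [inf_idem]

lemma conv_br_orbit (A C : Submodule (ZMod 2) E) (o : Set X)
    (hoA : o ⊆ XA E X A)
    (γ : X → X) (hinj : Set.InjOn γ o)
    (Oγ : Set (X × X)) (hOγ : Oγ = {q : X × X | ∃ x ∈ o, q = (γ x, x)})
    (M : Set (X × X)) (hM1 : p1 X M = o) (ε : Dl E (A ⊓ C))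
    (M' : Set (X × X)) (hM' : M' = {q : X × X | ∃ p ∈ M, q = (γ p.1, p.2)}) :
    conv E X A A C (br E X A A Oγ 0) (br E X A C M ε) = br E X A C M' ε := by
  funext p
  obtain ⟨⟨x, z⟩, η⟩ := p
  rw [conv_apply, card_AAC, mul_div_assoc, div_self (card_ne_zero E (A ⊓ C)), mul_one]
  -- inner pointwise evaluation
  have inner_key : ∀ (y : X) (ε₁ : Dl E (A ⊓ A)) (ε₂ : Dl E (A ⊓ C)),
      (if res E (leAB E A A C) ε₁ + res E (leBC E A A C) ε₂
            + res E (leAC E A A C) (((x, z), η) : (X × X) × Dl E (A ⊓ C)).2 = 0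
        then br E X A A Oγ 0 ((x, y), ε₁) * br E X A C M ε ((y, z), ε₂) else 0)
      = if ε₁ = 0 ∧ ε₂ = ε ∧ y ∈ o ∧ γ y = x ∧ (y, z) ∈ M ∧ η = ε then 1 else 0 := by
    intro y ε₁ ε₂
    by_cases h : ε₁ = 0 ∧ ε₂ = ε ∧ y ∈ o ∧ γ y = x ∧ (y, z) ∈ M ∧ η = ε
    · obtain ⟨h1, h2, h3, h4, h5, h6⟩ := h
      have hcond : res E (leAB E A A C) ε₁ + res E (leBC E A A C) ε₂
          + res E (leAC E A A C) (((x, z), η) : (X × X) × Dl E (A ⊓ C)).2 = 0 := by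
        rw [h1, h2, res_zero E, zero_add]
        show res E (leBC E A A C) ε + res E (leAC E A A C) η = 0
        rw [h6]
        exact dl_add_self E (res E (leBC E A A C) ε)
      rw [if_pos hcond, if_pos ⟨h1, h2, h3, h4, h5, h6⟩, br_apply, br_apply,
        if_pos ⟨(by rw [hOγ]; exact ⟨y, h3, by rw [h4]⟩ : (x, y) ∈ Oγ), h1⟩,
        if_pos ⟨h5, h2⟩, one_mul]
    · rw [if_neg h]
      by_cases hc : res E (leAB E A A C) ε₁ + res E (leBC E A A C) ε₂
          + res E (leAC E A A C) (((x, z), η) : (X × X) × Dl E (A ⊓ C)).2 = 0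
      · rw [if_pos hc, br_apply, br_apply]
        by_cases hb1 : ((x, y) ∈ Oγ) ∧ ε₁ = (0 : Dl E (A ⊓ A))
        · by_cases hb2 : ((y, z) ∈ M) ∧ ε₂ = ε
          · exfalso
            apply h
            obtain ⟨hm1, he1⟩ := hb1
            obtain ⟨hm2, he2⟩ := hb2
            rw [hOγ] at hm1
            obtain ⟨w, hw, hq⟩ := hm1
            have hx1 : x = γ w := congrArg Prod.fst hq
            have hy1 : y = w := congrArg Prod.snd hq
            subst hy1
            have hηε : η = ε := by
              rw [he1, he2, res_zero E, zero_add] at hc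
              exact (res_AAC_inj E A C ((dl_add_eq_zero_iff E).mp hc)).symm
            exact ⟨he1, he2, hw, hx1.symm, hm2, hηε⟩
          · rw [if_neg hb2, mul_zero]
        · rw [if_neg hb1, zero_mul]
      · rw [if_neg hc]
  -- collapse the two dual sums
  have sum_key : ∀ y : X,
      (if y ∈ XA E X A then
          (∑ ε₁ : Dl E (A ⊓ A), ∑ ε₂ : Dl E (A ⊓ C),
            if res E (leAB E A A C) ε₁ + res E (leBC E A A C) ε₂
                + res E (leAC E A A C) (((x, z), η) : (X × X) × Dl E (A ⊓ C)).2 = 0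
            then br E X A A Oγ 0 ((x, y), ε₁) * br E X A C M ε ((y, z), ε₂) else 0)
        else 0)
      = if y ∈ o ∧ γ y = x ∧ (y, z) ∈ M ∧ η = ε then 1 else 0 := by
    intro y
    have hsum : (∑ ε₁ : Dl E (A ⊓ A), ∑ ε₂ : Dl E (A ⊓ C),
        if res E (leAB E A A C) ε₁ + res E (leBC E A A C) ε₂
            + res E (leAC E A A C) (((x, z), η) : (X × X) × Dl E (A ⊓ C)).2 = 0
        then br E X A A Oγ 0 ((x, y), ε₁) * br E X A C M ε ((y, z), ε₂) else 0)
        = if y ∈ o ∧ γ y = x ∧ (y, z) ∈ M ∧ η = ε then 1 else 0 := by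
      rw [Fintype.sum_eq_single (0 : Dl E (A ⊓ A)) (fun ε₁ hε₁ => Finset.sum_eq_zero
        fun ε₂ _ => by rw [inner_key y ε₁ ε₂, if_neg (fun hh => hε₁ hh.1)])]
      rw [Fintype.sum_eq_single ε (fun ε₂ hε₂ => by
        rw [inner_key y 0 ε₂, if_neg (fun hh => hε₂ hh.2.1)])]
      rw [inner_key y 0 ε]
      by_cases hR : y ∈ o ∧ γ y = x ∧ (y, z) ∈ M ∧ η = ε
      · rw [if_pos ⟨rfl, rfl, hR⟩, if_pos hR]
      · rw [if_neg (fun hh => hR hh.2.2), if_neg hR]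
    by_cases hyXA : y ∈ XA E X A
    · rw [if_pos hyXA]; exact hsum
    · rw [if_neg hyXA, if_neg (fun hh => hyXA (hoA hh.1))]
  -- final evaluation
  simp only [sum_key]
  rw [br_apply]
  by_cases hT : ((x, z) ∈ M') ∧ η = ε
  · obtain ⟨hxz, hηε⟩ := hT
    have hxz' := hxz
    rw [hM'] at hxz'
    obtain ⟨⟨w, z'⟩, hwM, hq⟩ := hxz'
    have hx1 : x = γ w := congrArg Prod.fst hq
    have hz1 : z = z' := congrArg Prod.snd hq
    subst hz1
    have hwo : w ∈ o := by
      rw [← hM1]; exact ⟨(w, z), hwM, rfl⟩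
    rw [if_pos ⟨hxz, hηε⟩]
    rw [Fintype.sum_eq_single w (fun y hy => if_neg (fun hh => hy
      (hinj hh.1 hwo (hh.2.1.trans hx1))))]
    rw [if_pos ⟨hwo, hx1.symm, hwM, hηε⟩]
  · rw [if_neg hT]
    refine Finset.sum_eq_zero fun y _ => if_neg fun hh => hT ?_
    refine ⟨by rw [hM']; exact ⟨(y, z), hh.2.2.1, by rw [hh.2.1]⟩, hh.2.2.2⟩

lemma emb_same (A B : Submodule (ZMod 2) E) (f : (X × X) × Dl E (A ⊓ B) → ℂ) :
    emb E X A B f A B = f := by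
  funext p
  simp [emb]

lemma emb_ne (A B A' B' : Submodule (ZMod 2) E) (f : (X × X) × Dl E (A ⊓ B) → ℂ)
    (h : ¬(A = A' ∧ B = B')) : emb E X A B f A' B' = 0 :=
  funext fun p => dif_neg h

lemma mulFF_emb (A C : Submodule (ZMod 2) E)
    (f : (X × X) × Dl E (A ⊓ A) → ℂ) (g : (X × X) × Dl E (A ⊓ C) → ℂ) :
    mulFF E X (emb E X A A f) (emb E X A C g) = emb E X A C (conv E X A A C f g) := by
  funext A' C'
  show (∑ᶠ B, conv E X A' B C' (emb E X A A f A' B) (emb E X A C g B C'))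
      = emb E X A C (conv E X A A C f g) A' C'
  rw [finsum_eq_sum_of_fintype]
  by_cases hA : A = A'
  · subst hA
    by_cases hC : C = C'
    · subst hC
      rw [Fintype.sum_eq_single A (fun B hB => by
        rw [emb_ne E X A C B C g (fun hh => hB hh.1.symm), conv_zero_right])]
      rw [emb_same, emb_same, emb_same]
    · rw [emb_ne E X A C A C' (conv E X A A C f g) (fun hh => hC hh.2)]
      exact Finset.sum_eq_zero fun B _ => by
        rw [emb_ne E X A C B C' g (fun hh => hC hh.2), conv_zero_right]
  · rw [emb_ne E X A C A' C' (conv E X A A C f g) (fun hh => hA hh.1)]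
    exact Finset.sum_eq_zero fun B _ => by
      rw [emb_ne E X A A A' B f (fun hh => hA hh.1), conv_zero_left]

lemma conv_bSum (A B C : Submodule (ZMod 2) E) (f : (X × X) × Dl E (A ⊓ A) → ℂ)
    (M M' : Set (X × X)) (α : Dl E (A ⊓ B ⊓ C))
    (hbr : ∀ ε : Dl E (A ⊓ C),
      conv E X A A C f (br E X A C M ε) = br E X A C M' ε) :
    conv E X A A C f (bSum E X A B C M α) = bSum E X A B C M' α := by
  unfold bSum
  simp only [finsum_eq_if, finsum_eq_sum_of_fintype]
  rw [conv_finsetsum_right]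
  refine Finset.sum_congr rfl fun ε _ => ?_
  split_ifs with h
  · exact hbr ε
  · exact conv_zero_right E X A A C f

/-- Pushforward of a set along `γ` in the first coordinate. -/
def pushSet (γ : X → X) (M : Set (X × X)) : Set (X × X) :=
  {q : X × X | ∃ p ∈ M, q = (γ p.1, p.2)}

lemma p1_pushSet (γ : X → X) (M : Set (X × X)) :
    p1 X (pushSet X γ M) = γ '' p1 X M := by
  ext u
  constructor
  · rintro ⟨q, ⟨pp, hp, rfl⟩, rfl⟩
    exact ⟨pp.1, ⟨pp, hp, rfl⟩, rfl⟩
  · rintro ⟨v, ⟨pp, hp, rfl⟩, rfl⟩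
    exact ⟨(γ pp.1, pp.2), ⟨pp, hp, rfl⟩, rfl⟩

lemma pushSet_pushSet (o : Set X) (γ δ : X → X) (h : ∀ w ∈ o, δ (γ w) = w)
    (M : Set (X × X)) (hp1 : p1 X M ⊆ o) :
    pushSet X δ (pushSet X γ M) = M := by
  ext ⟨u, v⟩
  constructor
  · rintro ⟨q, ⟨pp, hp, rfl⟩, heq⟩
    have h1 : δ (γ pp.1) = pp.1 := h pp.1 (hp1 ⟨pp, hp, rfl⟩)
    have hu : u = δ (γ pp.1) := congrArg Prod.fst heq
    have hv : v = pp.2 := congrArg Prod.snd heq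
    rw [hu, hv, h1]
    exact hp
  · intro hu
    exact ⟨(γ u, v), ⟨(u, v), hu, rfl⟩, by rw [h u (hp1 ⟨(u, v), hu, rfl⟩)]⟩

lemma push_orbEB (A B C : Submodule (ZMod 2) E) (o o' : Set X)
    (γ : X → X) (hmaps : Set.MapsTo γ o o') (himg : γ '' o = o')
    (hγE : ∀ (e : E), ∀ x ∈ o, γ (e +ᵥ x) = e +ᵥ γ x)
    (ho'A : o' ⊆ XA E X A)
    (M : Set (X × X)) (hM : IsOrbEB E X A B C M) (hp1 : p1 X M = o) :
    IsOrbEB E X A B C (pushSet X γ M) ∧ p1 X (pushSet X γ M) = o' := by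
  obtain ⟨x₀, y₀, hx₀, hy₀, rfl⟩ := hM
  have hx₀o : x₀ ∈ o := by
    rw [← hp1]
    exact ⟨(x₀, y₀), ⟨0, 0, zero_mem B, by simp⟩, rfl⟩
  constructor
  · refine ⟨γ x₀, y₀, ho'A (hmaps hx₀o), hy₀, ?_⟩
    ext ⟨u, v⟩
    constructor
    · rintro ⟨q, ⟨e, b, hb, rfl⟩, heq⟩
      have hu : u = γ ((e + b) +ᵥ x₀) := congrArg Prod.fst heq
      have hv : v = e +ᵥ y₀ := congrArg Prod.snd heq
      exact ⟨e, b, hb, by rw [hu, hv, hγE (e + b) x₀ hx₀o]⟩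
    · rintro ⟨e, b, hb, huv⟩
      exact ⟨((e + b) +ᵥ x₀, e +ᵥ y₀), ⟨e, b, hb, rfl⟩,
        by rw [huv, hγE (e + b) x₀ hx₀o]⟩
  · rw [p1_pushSet, hp1, himg]

/-- Left multiplication by a fixed element of `FF`, as a linear map. -/
def Lmul (u : FF E X) : FF E X →ₗ[ℂ] FF E X where
  toFun m := mulFF E X u m
  map_add' m m' := by
    funext A C
    show (∑ᶠ B, conv E X A B C (u A B) ((m + m') B C))
        = (∑ᶠ B, conv E X A B C (u A B) (m B C)) + ∑ᶠ B, conv E X A B C (u A B) (m' B C)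
    rw [finsum_eq_sum_of_fintype, finsum_eq_sum_of_fintype, finsum_eq_sum_of_fintype,
      ← Finset.sum_add_distrib]
    refine Finset.sum_congr rfl fun B _ => ?_
    show conv E X A B C (u A B) (m B C + m' B C) = _
    rw [conv_add_right]
  map_smul' c m := by
    funext A C
    show (∑ᶠ B, conv E X A B C (u A B) ((c • m) B C))
        = c • ∑ᶠ B, conv E X A B C (u A B) (m B C)
    rw [finsum_eq_sum_of_fintype, finsum_eq_sum_of_fintype, Finset.smul_sum]
    refine Finset.sum_congr rfl fun B _ => ?_
    show conv E X A B C (u A B) (c • m B C) = _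
    rw [conv_smul_right]

lemma Lmul_apply (u m : FF E X) : Lmul E X u m = mulFF E X u m := rfl

/-- for an `E`-equivariant bijection `γ : o → o'` between `E`-orbits in
`X_A`, one has `[𝒪_γ]^0 ⋆ [𝓜]^ε = [𝓜']^ε`, and left multiplication by `[𝒪_γ]^0`
defines a `ℂ`-linear isomorphism `[[oB]] → [[o'B]]` carrying `𝓑_{oB}` onto `𝓑_{o'B}`. -/
theorem statement15 (A B : Submodule (ZMod 2) E) (o o' : Set X)
    (ho : ∃ x ∈ XA E X A, o = orb E X x) (ho' : ∃ x ∈ XA E X A, o' = orb E X x)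
    (γ : X → X) (hγ : Set.BijOn γ o o')
    (hγE : ∀ (e : E), ∀ x ∈ o, γ (e +ᵥ x) = e +ᵥ γ x)
    (Oγ : Set (X × X)) (hOγ : Oγ = {q : X × X | ∃ x ∈ o, q = (γ x, x)}) :
    (∀ (C : Submodule (ZMod 2) E) (M : Set (X × X)),
      IsOrbEB E X A B C M → p1 X M = o → ∀ ε : Dl E (A ⊓ C),
        ∀ M' : Set (X × X), M' = {q : X × X | ∃ p ∈ M, q = (γ p.1, p.2)} →
          conv E X A A C (br E X A A Oγ 0) (br E X A C M ε) = br E X A C M' ε) ∧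
    ((fun m => mulFF E X (emb E X A A (br E X A A Oγ 0)) m) '' BoB E X A B o
        = BoB E X A B o') ∧
    ∃ φ : ↥(ooB E X A B o) ≃ₗ[ℂ] ↥(ooB E X A B o'),
      ∀ m : ↥(ooB E X A B o),
        (φ m : FF E X) = mulFF E X (emb E X A A (br E X A A Oγ 0)) ↑m := by
  obtain ⟨x₀, hx₀A, ho_orb⟩ := ho
  obtain ⟨x₀', hx₀'A, ho'_orb⟩ := ho'
  haveI : Nonempty X := ⟨x₀⟩
  have hoXA : o ⊆ XA E X A := ho_orb ▸ orb_subset_XA E X hx₀A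
  have ho'XA : o' ⊆ XA E X A := ho'_orb ▸ orb_subset_XA E X hx₀'A
  have ho_stable : ∀ (e : E), ∀ y ∈ o, e +ᵥ y ∈ o := by
    intro e y hy; rw [ho_orb] at hy ⊢; exact orb_vadd E X hy e
  -- the inverse bijection
  set δ := Function.invFunOn γ o with hδdef
  have hδγ : ∀ w ∈ o, δ (γ w) = w := fun w hw => hγ.injOn.leftInvOn_invFunOn hw
  have hγδ : ∀ w ∈ o', γ (δ w) = w := fun w hw => hγ.invOn_invFunOn.2 hw
  have hδinj : Set.InjOn δ o' := fun a ha b hb h => by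
    rw [← hγδ a ha, ← hγδ b hb, h]
  have hδmaps : Set.MapsTo δ o' o := by
    intro w hw
    rw [← hγ.image_eq] at hw
    obtain ⟨v, hv, rfl⟩ := hw
    rw [hδγ v hv]; exact hv
  have hδimg : δ '' o' = o := by
    apply Set.Subset.antisymm (Set.mapsTo_iff_image_subset.mp hδmaps)
    intro w hw
    exact ⟨γ w, hγ.mapsTo hw, hδγ w hw⟩
  have hδE : ∀ (e : E), ∀ y ∈ o', δ (e +ᵥ y) = e +ᵥ δ y := by
    intro e y hy
    rw [← hγ.image_eq] at hy
    obtain ⟨v, hv, rfl⟩ := hy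
    rw [hδγ v hv, ← hγE e v hv, hδγ (e +ᵥ v) (ho_stable e v hv)]
  set Oδ : Set (X × X) := {q : X × X | ∃ x ∈ o', q = (δ x, x)} with hOδ
  set u := emb E X A A (br E X A A Oγ 0) with hu
  set u' := emb E X A A (br E X A A Oδ 0) with hu'
  -- convolution push facts
  have hγpushconv : ∀ (C : Submodule (ZMod 2) E) (M : Set (X × X)) (α : Dl E (A ⊓ B ⊓ C)),
      p1 X M = o →
      mulFF E X u (emb E X A C (bSum E X A B C M α))
        = emb E X A C (bSum E X A B C (pushSet X γ M) α) := by
    intro C M α hp1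
    rw [hu, mulFF_emb, conv_bSum E X A B C _ M (pushSet X γ M) α
      (fun ε => conv_br_orbit E X A C o hoXA γ hγ.injOn Oγ hOγ M hp1 ε _ rfl)]
  have hδpushconv : ∀ (C : Submodule (ZMod 2) E) (M : Set (X × X)) (α : Dl E (A ⊓ B ⊓ C)),
      p1 X M = o' →
      mulFF E X u' (emb E X A C (bSum E X A B C M α))
        = emb E X A C (bSum E X A B C (pushSet X δ M) α) := by
    intro C M α hp1
    rw [hu', mulFF_emb, conv_bSum E X A B C _ M (pushSet X δ M) α
      (fun ε => conv_br_orbit E X A C o' ho'XA δ hδinj Oδ hOδ M hp1 ε _ rfl)]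
  -- orbit push facts
  have hγpush : ∀ (C : Submodule (ZMod 2) E) (M : Set (X × X)),
      IsOrbEB E X A B C M → p1 X M = o →
      IsOrbEB E X A B C (pushSet X γ M) ∧ p1 X (pushSet X γ M) = o' :=
    fun C M hM hp1 =>
      push_orbEB E X A B C o o' γ hγ.mapsTo hγ.image_eq hγE ho'XA M hM hp1
  have hδpush : ∀ (C : Submodule (ZMod 2) E) (M : Set (X × X)),
      IsOrbEB E X A B C M → p1 X M = o' →
      IsOrbEB E X A B C (pushSet X δ M) ∧ p1 X (pushSet X δ M) = o :=
    fun C M hM hp1 =>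
      push_orbEB E X A B C o' o δ hδmaps hδimg hδE hoXA M hM hp1
  -- Part 1
  have part1 : ∀ (C : Submodule (ZMod 2) E) (M : Set (X × X)),
      IsOrbEB E X A B C M → p1 X M = o → ∀ ε : Dl E (A ⊓ C),
        ∀ M' : Set (X × X), M' = {q : X × X | ∃ p ∈ M, q = (γ p.1, p.2)} →
          conv E X A A C (br E X A A Oγ 0) (br E X A C M ε) = br E X A C M' ε :=
    fun C M _ hp1 ε M' hM' =>
      conv_br_orbit E X A C o hoXA γ hγ.injOn Oγ hOγ M hp1 ε M' hM'
  -- Part 2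
  have part2 : (fun m => mulFF E X u m) '' BoB E X A B o = BoB E X A B o' := by
    apply Set.Subset.antisymm
    · rintro g' ⟨g, hg, rfl⟩
      rw [BoB, Set.mem_iUnion] at hg
      obtain ⟨C, M, α, hM, hp1, hge⟩ := hg
      rw [BoB, Set.mem_iUnion]
      refine ⟨C, pushSet X γ M, α, (hγpush C M hM hp1).1, (hγpush C M hM hp1).2, ?_⟩
      show mulFF E X u g = _
      rw [hge, hγpushconv C M α hp1]
    · intro g' hg'
      rw [BoB, Set.mem_iUnion] at hg'
      obtain ⟨C, M'', α, hM'', hp1'', hg'e⟩ := hg'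
      refine ⟨emb E X A C (bSum E X A B C (pushSet X δ M'') α), ?_, ?_⟩
      · rw [BoB, Set.mem_iUnion]
        exact ⟨C, pushSet X δ M'', α, (hδpush C M'' hM'' hp1'').1,
          (hδpush C M'' hM'' hp1'').2, rfl⟩
      · show mulFF E X u _ = g'
        rw [hγpushconv C (pushSet X δ M'') α (hδpush C M'' hM'' hp1'').2,
          pushSet_pushSet X o' δ γ hγδ M'' (le_of_eq hp1'')]
        exact hg'e.symm
  refine ⟨part1, part2, ?_⟩
  -- Part 3
  have part2' : (fun m => mulFF E X u' m) '' BoB E X A B o' = BoB E X A B o := by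
    apply Set.Subset.antisymm
    · rintro g' ⟨g, hg, rfl⟩
      rw [BoB, Set.mem_iUnion] at hg
      obtain ⟨C, M, α, hM, hp1, hge⟩ := hg
      rw [BoB, Set.mem_iUnion]
      refine ⟨C, pushSet X δ M, α, (hδpush C M hM hp1).1, (hδpush C M hM hp1).2, ?_⟩
      show mulFF E X u' g = _
      rw [hge, hδpushconv C M α hp1]
    · intro g' hg'
      rw [BoB, Set.mem_iUnion] at hg'
      obtain ⟨C, M'', α, hM'', hp1'', hg'e⟩ := hg'
      refine ⟨emb E X A C (bSum E X A B C (pushSet X γ M'') α), ?_, ?_⟩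
      · rw [BoB, Set.mem_iUnion]
        exact ⟨C, pushSet X γ M'', α, (hγpush C M'' hM'' hp1'').1,
          (hγpush C M'' hM'' hp1'').2, rfl⟩
      · show mulFF E X u' _ = g'
        rw [hδpushconv C (pushSet X γ M'') α (hγpush C M'' hM'' hp1'').2,
          pushSet_pushSet X o γ δ hδγ M'' (le_of_eq hp1'')]
        exact hg'e.symm
  have hmap : ∀ x ∈ ooB E X A B o, Lmul E X u x ∈ ooB E X A B o' := by
    intro m hm
    have h1 : Lmul E X u m ∈ Submodule.map (Lmul E X u) (ooB E X A B o) :=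
      ⟨m, hm, rfl⟩
    rw [ooB, Submodule.map_span] at h1
    have himg : ⇑(Lmul E X u) '' BoB E X A B o = BoB E X A B o' := part2
    rw [himg] at h1
    exact h1
  have hmap' : ∀ x ∈ ooB E X A B o', Lmul E X u' x ∈ ooB E X A B o := by
    intro m hm
    have h1 : Lmul E X u' m ∈ Submodule.map (Lmul E X u') (ooB E X A B o') :=
      ⟨m, hm, rfl⟩
    rw [ooB, Submodule.map_span] at h1
    have himg : ⇑(Lmul E X u') '' BoB E X A B o' = BoB E X A B o := part2'
    rw [himg] at h1
    exact h1
  have hLL' : ∀ g ∈ BoB E X A B o, Lmul E X u' (Lmul E X u g) = g := by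
    intro g hg
    rw [BoB, Set.mem_iUnion] at hg
    obtain ⟨C, M, α, hM, hp1, hge⟩ := hg
    rw [hge, Lmul_apply, Lmul_apply, hγpushconv C M α hp1,
      hδpushconv C (pushSet X γ M) α (hγpush C M hM hp1).2,
      pushSet_pushSet X o γ δ hδγ M (le_of_eq hp1)]
  have hL'L : ∀ g ∈ BoB E X A B o', Lmul E X u (Lmul E X u' g) = g := by
    intro g hg
    rw [BoB, Set.mem_iUnion] at hg
    obtain ⟨C, M, α, hM, hp1, hge⟩ := hg
    rw [hge, Lmul_apply, Lmul_apply, hδpushconv C M α hp1,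
      hγpushconv C (pushSet X δ M) α (hδpush C M hM hp1).2,
      pushSet_pushSet X o' δ γ hγδ M (le_of_eq hp1)]
  have hLL'span : ∀ m ∈ ooB E X A B o, Lmul E X u' (Lmul E X u m) = m := by
    intro m hm
    have hle : ooB E X A B o ≤
        LinearMap.eqLocus ((Lmul E X u').comp (Lmul E X u)) LinearMap.id :=
      Submodule.span_le.mpr fun g hg => LinearMap.mem_eqLocus.mpr (hLL' g hg)
    exact LinearMap.mem_eqLocus.mp (hle hm)
  have hL'Lspan : ∀ m ∈ ooB E X A B o', Lmul E X u (Lmul E X u' m) = m := by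
    intro m hm
    have hle : ooB E X A B o' ≤
        LinearMap.eqLocus ((Lmul E X u).comp (Lmul E X u')) LinearMap.id :=
      Submodule.span_le.mpr fun g hg => LinearMap.mem_eqLocus.mpr (hL'L g hg)
    exact LinearMap.mem_eqLocus.mp (hle hm)
  refine ⟨LinearEquiv.ofLinear ((Lmul E X u).restrict hmap)
    ((Lmul E X u').restrict hmap') ?_ ?_, ?_⟩
  · apply LinearMap.ext
    rintro ⟨m, hm⟩
    apply Subtype.ext
    show Lmul E X u (Lmul E X u' m) = m
    exact hL'Lspan m hm
  · apply LinearMap.ext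
    rintro ⟨m, hm⟩
    apply Subtype.ext
    show Lmul E X u' (Lmul E X u m) = m
    exact hLL'span m hm
  · rintro ⟨m, hm⟩
    rfl
end Lusztig
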